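/- Let n be odd, let ∂_1^R,…,∂_n^R, ∂_1^P,…,∂_n^P be strictly positive real numbers, and let K < 0 with D > |K|, where D = ∏_{j=1}^{n} ∂_j^R ∂_j^P. Then every complex root of p(λ) = ∏_{j=1}^{n} (λ + ∂_j^R)(λ + ∂_j^P) − K has strictly negative real part; hence the central steady state E_C of the generalized n-gene repressilator is locally asymptotically stable. -/

import Mathlib

/-- Let `n` be odd, `∂_j^R, ∂_j^P > 0`, and `K < 0` with `D > |K|`, where
`D = ∏_{j=1}^n ∂_j^R ∂_j^P`. Then every complex root of
`p(λ) = ∏_{j=1}^n (λ + ∂_j^R)(λ + ∂_j^P) − K` has strictly negative real part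
(hence the central steady state `E_C` is locally asymptotically stable). -/
theorem odd_stability_sufficient (n : ℕ) (hn : Odd n)
    (dR dP : Fin n → ℝ) (hdR : ∀ j, 0 < dR j) (hdP : ∀ j, 0 < dP j)
    (K : ℝ) (hK : K < 0) (hDK : (∏ j : Fin n, dR j * dP j) > |K|) :
    ∀ z : ℂ, (∏ j : Fin n, ((z + (dR j : ℂ)) * (z + (dP j : ℂ)))) - (K : ℂ) = 0 →
      z.re < 0 := by
  intro z hz
  by_contra hre
  push_neg at hre
  have hprod : (∏ j : Fin n, ((z + (dR j : ℂ)) * (z + (dP j : ℂ)))) = (K : ℂ) := by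
    linear_combination hz
  have key : ∀ a : ℝ, 0 < a → a ≤ ‖z + (a : ℂ)‖ := by
    intro a ha
    calc a ≤ (z + (a : ℂ)).re := by simp; linarith
    _ ≤ ‖z + (a : ℂ)‖ := Complex.re_le_norm _
  have hle : (∏ j : Fin n, dR j * dP j) ≤
      ∏ j : Fin n, ‖(z + (dR j : ℂ)) * (z + (dP j : ℂ))‖ := by
    apply Finset.prod_le_prod
    · intro j _; exact le_of_lt (mul_pos (hdR j) (hdP j))
    · intro j _
      rw [norm_mul]
      exact mul_le_mul (key _ (hdR j)) (key _ (hdP j)) (le_of_lt (hdP j))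
        (norm_nonneg _)
  rw [← norm_prod, hprod, Complex.norm_real, Real.norm_eq_abs] at hle
  linarith
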